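/- Let A be a real m×m matrix with m real eigenvalues counted with multiplicity, all of the same sign (all positive or all negative), and suppose A^{-1} = S B for a symmetric positive definite matrix S and symmetric matrix B. Then B is positive definite if the eigenvalues of A are positive, and negative definite if they are negative. -/

import Mathlib

open Matrix Polynomial

private lemma eval_charpoly_aux {m : ℕ} (M : Matrix (Fin m) (Fin m) ℝ) (x : ℝ) :
    M.charpoly.eval x = (x • (1 : Matrix (Fin m) (Fin m) ℝ) - M).det := by
  rw [Matrix.charpoly, ← Polynomial.coe_evalRingHom, RingHom.map_det]
  congr 1
  ext i j
  by_cases h : i = j <;>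
    simp [Matrix.charmatrix_apply, Matrix.diagonal_apply, h, Matrix.one_apply,
      Matrix.smul_apply, Matrix.sub_apply]

private lemma mem_roots_of_eig_aux {m : ℕ} (A : Matrix (Fin m) (Fin m) ℝ)
    {w : Fin m → ℝ} {c : ℝ} (hw : w ≠ 0) (h : A *ᵥ w = c • w) :
    c ∈ A.charpoly.roots := by
  rw [Polynomial.mem_roots (A.charpoly_monic.ne_zero)]
  rw [Polynomial.IsRoot, eval_charpoly_aux]
  by_contra hdet
  apply hw
  apply Matrix.eq_zero_of_mulVec_eq_zero hdet
  rw [Matrix.sub_mulVec, Matrix.smul_mulVec, Matrix.one_mulVec, h, sub_self]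

private lemma posDef_conj_aux {m : ℕ} {M C : Matrix (Fin m) (Fin m) ℝ} (hM : M.PosDef)
    (hC : C.det ≠ 0) : (Cᴴ * M * C).PosDef := by
  refine Matrix.PosDef.of_dotProduct_mulVec_pos (Matrix.isHermitian_conjTranspose_mul_mul C hM.1) fun x hx => ?_
  have h1 : C *ᵥ x ≠ 0 := fun h => hx (Matrix.eq_zero_of_mulVec_eq_zero hC h)
  simpa only [star_mulVec, Matrix.dotProduct_mulVec, Matrix.vecMul_vecMul] using
    hM.dotProduct_mulVec_pos h1

private lemma unitary_det_ne_zero_aux {m : ℕ} {M : Matrix (Fin m) (Fin m) ℝ}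
    (hM : M.IsHermitian) :
    (star (hM.eigenvectorUnitary : Matrix (Fin m) (Fin m) ℝ)).det ≠ 0 := by
  have h1 : star (hM.eigenvectorUnitary : Matrix (Fin m) (Fin m) ℝ) *
      (hM.eigenvectorUnitary : Matrix (Fin m) (Fin m) ℝ) = 1 :=
    Unitary.coe_star_mul_self hM.eigenvectorUnitary
  have h2 : (star (hM.eigenvectorUnitary : Matrix (Fin m) (Fin m) ℝ)).det *
      (hM.eigenvectorUnitary : Matrix (Fin m) (Fin m) ℝ).det = 1 := by
    rw [← Matrix.det_mul, h1, Matrix.det_one]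
  intro h
  rw [h, zero_mul] at h2
  exact zero_ne_one h2

private lemma posDef_of_eigs_aux {m : ℕ} {M : Matrix (Fin m) (Fin m) ℝ} (hM : M.IsHermitian)
    (h : ∀ i, 0 < hM.eigenvalues i) : M.PosDef := by
  have hspec := hM.spectral_theorem
  have hD : (Matrix.diagonal (RCLike.ofReal ∘ hM.eigenvalues) :
      Matrix (Fin m) (Fin m) ℝ).PosDef :=
    Matrix.PosDef.diagonal fun i => h i
  have hM' : M = (star (hM.eigenvectorUnitary : Matrix (Fin m) (Fin m) ℝ))ᴴ *
      Matrix.diagonal (RCLike.ofReal ∘ hM.eigenvalues) *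
      (star (hM.eigenvectorUnitary : Matrix (Fin m) (Fin m) ℝ)) := by
    rw [Matrix.star_eq_conjTranspose, Matrix.conjTranspose_conjTranspose]
    exact hspec
  rw [hM']
  exact posDef_conj_aux hD (unitary_det_ne_zero_aux hM)

private lemma negDef_of_eigs_aux {m : ℕ} {M : Matrix (Fin m) (Fin m) ℝ} (hM : M.IsHermitian)
    (h : ∀ i, hM.eigenvalues i < 0) : (-M).PosDef := by
  have hspec := hM.spectral_theorem
  have hD : (Matrix.diagonal (fun i => -(RCLike.ofReal (hM.eigenvalues i))) :
      Matrix (Fin m) (Fin m) ℝ).PosDef :=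
    Matrix.PosDef.diagonal fun i => by
      simpa using neg_pos.2 (h i)
  have hdiagneg : (Matrix.diagonal (fun i => -(RCLike.ofReal (hM.eigenvalues i))) :
      Matrix (Fin m) (Fin m) ℝ) = -Matrix.diagonal (RCLike.ofReal ∘ hM.eigenvalues) := by
    rw [← Matrix.diagonal_neg]
    rfl
  have hM' : -M = (star (hM.eigenvectorUnitary : Matrix (Fin m) (Fin m) ℝ))ᴴ *
      Matrix.diagonal (fun i => -(RCLike.ofReal (hM.eigenvalues i))) *
      (star (hM.eigenvectorUnitary : Matrix (Fin m) (Fin m) ℝ)) := by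
    rw [Matrix.star_eq_conjTranspose, Matrix.conjTranspose_conjTranspose,
      hdiagneg, Matrix.mul_neg, Matrix.neg_mul, ← Matrix.star_eq_conjTranspose]
    exact congrArg Neg.neg hspec
  rw [hM']
  exact posDef_conj_aux hD (unitary_det_ne_zero_aux hM)

/-- Lemma 1 (abstract form): let `A` be a real `m×m` matrix with `m` real eigenvalues counted
with multiplicity, all of the same sign, and suppose `A⁻¹ = S * B` with `S` symmetric positive
definite and `B` symmetric. Then `B` is positive definite if the eigenvalues of `A` are all
positive, and negative definite if they are all negative. -/
theorem inverse_factor_definite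
    {m : ℕ} (A S B : Matrix (Fin m) (Fin m) ℝ)
    (hA : IsUnit A.det)
    (hreal : A.charpoly.roots.card = m)
    (hsign : (∀ x ∈ A.charpoly.roots, 0 < x) ∨ (∀ x ∈ A.charpoly.roots, x < 0))
    (hS : S.PosDef) (hB : B.IsSymm)
    (hfact : A⁻¹ = S * B) :
    ((∀ x ∈ A.charpoly.roots, 0 < x) → B.PosDef) ∧
    ((∀ x ∈ A.charpoly.roots, x < 0) → (-B).PosDef) := by
  classical
  set T := (open MatrixOrder in CFC.sqrt S) with hTdef
  have hTps : T.PosSemidef := by open MatrixOrder in exact (CFC.sqrt_nonneg S).posSemidef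
  have hTT : T * T = S := by open MatrixOrder in exact CFC.sqrt_mul_sqrt_self S hS.posSemidef.nonneg
  have hSdet : S.det ≠ 0 := hS.det_pos.ne'
  have hTdet : T.det ≠ 0 := by
    intro h
    apply hSdet
    rw [← hTT, Matrix.det_mul, h, zero_mul]
  have hTh : T.IsHermitian := hTps.1
  have hBh : B.IsHermitian := by
    rw [Matrix.IsHermitian, Matrix.conjTranspose_eq_transpose_of_trivial]
    exact hB
  set M := T * B * T with hMdef
  have hMh : M.IsHermitian := by
    rw [Matrix.IsHermitian, hMdef]
    simp only [Matrix.conjTranspose_mul, hTh.eq, hBh.eq, Matrix.mul_assoc]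
  have key : A⁻¹ * T = T * M := by
    rw [hfact, ← hTT, hMdef]
    simp only [Matrix.mul_assoc]
  have hdetAinv : (A⁻¹).det ≠ 0 := by
    rw [Matrix.det_nonsing_inv, Ring.inverse_eq_inv']
    exact inv_ne_zero hA.ne_zero
  -- each inverse eigenvalue of M is a root of charpoly of A
  have hroot : ∀ i, (hMh.eigenvalues i)⁻¹ ∈ A.charpoly.roots ∧ hMh.eigenvalues i ≠ 0 := by
    intro i
    set μ := hMh.eigenvalues i with hμdef
    set v : Fin m → ℝ := ⇑(hMh.eigenvectorBasis i) with hvdef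
    have hv : v ≠ 0 := fun h => hMh.eigenvectorBasis.orthonormal.ne_zero i (PiLp.ext fun j => congrFun h j)
    have hMv : M *ᵥ v = μ • v := hMh.mulVec_eigenvectorBasis i
    set w := T *ᵥ v with hwdef
    have hw : w ≠ 0 := fun h => hv (Matrix.eq_zero_of_mulVec_eq_zero hTdet h)
    have hAw : A⁻¹ *ᵥ w = μ • w := by
      rw [hwdef, Matrix.mulVec_mulVec, key, ← Matrix.mulVec_mulVec, hMv, Matrix.mulVec_smul]
    have hμ : μ ≠ 0 := by
      intro h0
      rw [h0, zero_smul] at hAw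
      exact hw (Matrix.eq_zero_of_mulVec_eq_zero hdetAinv hAw)
    have hww : μ • (A *ᵥ w) = w := by
      have h1 : A *ᵥ (A⁻¹ *ᵥ w) = w := by
        rw [Matrix.mulVec_mulVec, Matrix.mul_nonsing_inv _ hA, Matrix.one_mulVec]
      rw [hAw, Matrix.mulVec_smul] at h1
      exact h1
    have hAw' : A *ᵥ w = μ⁻¹ • w := by
      calc A *ᵥ w = μ⁻¹ • (μ • (A *ᵥ w)) := by
            rw [smul_smul, inv_mul_cancel₀ hμ, one_smul]
        _ = μ⁻¹ • w := by rw [hww]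
    exact ⟨mem_roots_of_eig_aux A hw hAw', hμ⟩
  -- express B in terms of M
  have hTinv_det : (T⁻¹).det ≠ 0 := by
    rw [Matrix.det_nonsing_inv, Ring.inverse_eq_inv']
    exact inv_ne_zero hTdet
  have hTinv_h : (T⁻¹)ᴴ = T⁻¹ := by
    rw [Matrix.conjTranspose_nonsing_inv, hTh.eq]
  have hBM : (T⁻¹)ᴴ * M * T⁻¹ = B := by
    rw [hTinv_h, hMdef]
    rw [← Matrix.mul_assoc, ← Matrix.mul_assoc, Matrix.nonsing_inv_mul _ (isUnit_iff_ne_zero.mpr hTdet),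
      Matrix.one_mul, Matrix.mul_assoc, Matrix.mul_nonsing_inv _ (isUnit_iff_ne_zero.mpr hTdet), Matrix.mul_one]
  constructor
  · intro hpos
    have heig : ∀ i, 0 < hMh.eigenvalues i := fun i =>
      inv_pos.mp (hpos _ (hroot i).1)
    have hMpd := posDef_of_eigs_aux hMh heig
    have := posDef_conj_aux hMpd hTinv_det
    rwa [hBM] at this
  · intro hneg
    have heig : ∀ i, hMh.eigenvalues i < 0 := fun i =>
      inv_lt_zero.mp (hneg _ (hroot i).1)
    have hMnd := negDef_of_eigs_aux hMh heig
    have := posDef_conj_aux hMnd hTinv_det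
    rwa [Matrix.mul_neg, Matrix.neg_mul, hBM] at this
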